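/- Let X, Y be complex Banach spaces, A ∈ B(X) with σ(A) = {μ}, B ∈ B(Y) with σ(B) = {ν}, μν ≠ 0. If B − ν is quasi-nilpotent but not nilpotent, then τ_{AB} − μν is not nilpotent, where τ_{AB}(U) = AUB on B(Y,X). -/

import Mathlib

set_option synthInstance.maxHeartbeats 1000000
set_option maxHeartbeats 2000000
open ContinuousLinearMap Polynomial Finset


/-- If `σ(A) = {μ}`, `σ(B) = {ν}`, `μν ≠ 0`, and `B − ν` is quasi-nilpotent but not
nilpotent, then `τ_{AB} − μν` is not nilpotent, where `τ_{AB}(U) = A U B`. -/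
theorem tau_sub_munu_not_nilpotent
    {X Y : Type*} [NormedAddCommGroup X] [NormedSpace ℂ X] [CompleteSpace X]
    [NormedAddCommGroup Y] [NormedSpace ℂ Y] [CompleteSpace Y]
    (A : X →L[ℂ] X) (B : Y →L[ℂ] Y) (μ ν : ℂ)
    (hμν : μ * ν ≠ 0) (hσA : spectrum ℂ A = {μ}) (hσB : spectrum ℂ B = {ν})
    (T : (Y →L[ℂ] X) →L[ℂ] (Y →L[ℂ] X))
    (hT : ∀ U : Y →L[ℂ] X, T U = A.comp (U.comp B))
    (hq : spectrum ℂ (B - ν • 1) = {0}) (hn : ¬ IsNilpotent (B - ν • 1)) :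
    ¬ IsNilpotent (T - (μ * ν) • 1) := by
  rintro ⟨n, hΦn⟩
  set Bν : Y →L[ℂ] Y := B - ν • 1 with hBνdef
  have hBn : Bν ^ n ≠ 0 := fun h => hn ⟨n, h⟩
  obtain ⟨y, hy⟩ : ∃ y, (Bν ^ n) y ≠ 0 := by
    by_contra h
    push_neg at h
    exact hBn (ContinuousLinearMap.ext h)
  obtain ⟨f, hf1, hfz⟩ := exists_dual_vector ℂ _ (norm_ne_zero_iff.mpr hy)
  set post : (X →L[ℂ] X) → ((Y →L[ℂ] X) →L[ℂ] (Y →L[ℂ] X)) :=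
    fun C => ContinuousLinearMap.compL ℂ Y X X C with hpost
  set pre : (Y →L[ℂ] Y) → ((Y →L[ℂ] X) →L[ℂ] (Y →L[ℂ] X)) :=
    fun C => (ContinuousLinearMap.compL ℂ Y Y X).flip C with hpre
  set L : (Y →L[ℂ] X) →L[ℂ] (Y →L[ℂ] X) := post (A - μ • 1) * pre B with hL
  set M : (Y →L[ℂ] X) →L[ℂ] (Y →L[ℂ] X) := μ • pre Bν with hM
  have key1 : T - (μ * ν) • 1 = L + M := by
    ext U y'
    simp [hL, hM, hpost, hpre, hT, hBνdef, mul_apply, mul_smul, smul_sub]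
  have hcomm : Commute L M := by
    ext U y'
    simp [hL, hM, hpost, hpre, hBνdef, mul_apply, map_sub, map_smul, smul_sub]
    module
  have hL1 : ∀ (V : Y →L[ℂ] X) (y' : Y), (L V) y' = (A - μ • 1) (V (B y')) := by
    intro V y'
    simp [hL, hpost, hpre, mul_apply]
  have hM1 : ∀ (V : Y →L[ℂ] X) (y' : Y), (M V) y' = μ • V (Bν y') := by
    intro V y'
    simp [hM, hpre]
  have hLk : ∀ k (U : Y →L[ℂ] X) (y' : Y),
      ((L ^ k) U) y' = ((A - μ • 1) ^ k) (U ((B ^ k) y')) := by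
    intro k
    induction k with
    | zero => simp
    | succ k ih =>
      intro U y'
      rw [pow_succ' L, ContinuousLinearMap.mul_apply, hL1, ih, pow_succ' (A - μ • 1), pow_succ B]
      simp [mul_apply]
  have hMk : ∀ k (U : Y →L[ℂ] X) (y' : Y),
      ((M ^ k) U) y' = μ ^ k • U ((Bν ^ k) y') := by
    intro k
    induction k with
    | zero => simp
    | succ k ih =>
      intro U y'
      rw [pow_succ' M, ContinuousLinearMap.mul_apply, hM1, ih, pow_succ' μ, pow_succ Bν]
      simp [mul_apply, smul_smul, mul_comm]
  set c : ℕ → ℂ := fun k => (n.choose k : ℂ) * μ ^ (n - k) * f ((Bν ^ (n - k)) ((B ^ k) y)) with hc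
  have hval : ∀ x : X, ∑ k ∈ Finset.range (n + 1), c k • ((A - μ • 1) ^ k) x = 0 := by
    intro x
    have h0 : (((T - (μ * ν) • 1) ^ n) (f.smulRight x)) y = 0 := by rw [hΦn]; simp
    rw [key1, hcomm.add_pow] at h0
    rw [ContinuousLinearMap.sum_apply] at h0
    rw [ContinuousLinearMap.sum_apply] at h0
    rw [← h0]
    apply Finset.sum_congr rfl
    intro k _
    have hcast : ((n.choose k : ℕ) : (Y →L[ℂ] X) →L[ℂ] (Y →L[ℂ] X)) (f.smulRight x) = ((n.choose k : ℕ) : ℂ) • (f.smulRight x) := by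
      rw [ContinuousLinearMap.natCast_apply, Nat.cast_smul_eq_nsmul]
    rw [ContinuousLinearMap.mul_apply, ContinuousLinearMap.mul_apply, hcast, map_smul, map_smul, ContinuousLinearMap.smul_apply, hLk, hMk]
    simp [hc, smul_smul, mul_assoc, mul_comm, mul_left_comm]
  set p : ℂ[X] := ∑ k ∈ Finset.range (n + 1), Polynomial.C (c k) * (Polynomial.X - Polynomial.C μ) ^ k with hp
  have haev : (Polynomial.aeval A) p = 0 := by
    ext x
    have hvx := hval x
    simp only [hp, map_sum, map_mul, map_pow, Polynomial.aeval_C, Polynomial.aeval_X, map_sub,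
      Algebra.algebraMap_eq_smul_one, ContinuousLinearMap.sum_apply, mul_apply,
      ContinuousLinearMap.smul_apply, one_apply, ContinuousLinearMap.zero_apply]
    exact hvx
  have hnt : Nontrivial (X →L[ℂ] X) := by
    by_contra h
    rw [not_nontrivial_iff_subsingleton] at h
    have hμ : μ ∈ spectrum ℂ A := by rw [hσA]; rfl
    exact (spectrum.mem_iff.mp hμ) (isUnit_of_subsingleton _)
  have hmem : p.eval μ ∈ spectrum ℂ ((Polynomial.aeval A) p) :=
    spectrum.subset_polynomial_aeval A p ⟨μ, by rw [hσA]; rfl, rfl⟩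
  rw [haev, spectrum.zero_eq] at hmem
  have heval : p.eval μ = c 0 := by
    rw [hp, Polynomial.eval_finset_sum, Finset.sum_eq_single 0]
    · simp
    · intro k _ hk0
      simp [sub_self, zero_pow hk0]
    · intro h
      exact absurd (Finset.mem_range.mpr (Nat.succ_pos n)) h
  have hc0 : c 0 ≠ 0 := by
    have hμ0 : μ ≠ 0 := left_ne_zero_of_mul hμν
    simp only [hc, Nat.choose_zero_right, Nat.cast_one, one_mul, Nat.sub_zero, pow_zero,
      ContinuousLinearMap.one_apply, hfz]
    exact mul_ne_zero (pow_ne_zero _ hμ0) (Complex.ofReal_ne_zero.mpr (norm_ne_zero_iff.mpr hy))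
  rw [Set.mem_singleton_iff, heval] at hmem
  exact hc0 hmem
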